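/- arXiv:1410.7583 — 3 statements merged into one kernel-verified Lean document; each statement's English description precedes it below -/
import Mathlib

section
/- In a discounted MDP, if U is a nonempty well-defined subset of the improvement set T^π of a policy π, then π ⊕ U ≻ π. -/
/-- The transition matrix induced by a policy. -/
noncomputable def polMatrix {n k : ℕ} (P : Fin n → Fin k → Fin n → ℝ)
    (π : Fin n → Fin k) : Matrix (Fin n) (Fin n) ℝ :=
  Matrix.of fun s s' => P s (π s) s'

/-- The reward vector induced by a policy. -/
noncomputable def polReward {n k : ℕ} (r : Fin n → Fin k → ℝ)
    (π : Fin n → Fin k) : Fin n → ℝ :=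
  fun s => r s (π s)

/-- The value vector of a policy: `v^π = ∑_{i=0}^∞ γ^i (P^π)^i r^π`. -/
noncomputable def polValue {n k : ℕ} (P : Fin n → Fin k → Fin n → ℝ)
    (r : Fin n → Fin k → ℝ) (γ : ℝ) (π : Fin n → Fin k) : Fin n → ℝ :=
  ∑' i : ℕ, γ ^ i • (polMatrix P π ^ i).mulVec (polReward r π)

/-- `π ⪯ π'` : the policy `π'` dominates `π`. -/
def Dominates {n k : ℕ} (P : Fin n → Fin k → Fin n → ℝ) (r : Fin n → Fin k → ℝ)
    (γ : ℝ) (π π' : Fin n → Fin k) : Prop :=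
  ∀ s, polValue P r γ π s ≤ polValue P r γ π' s

/-- `π ≺ π'` : the policy `π'` strictly dominates `π`. -/
def StrictDominates {n k : ℕ} (P : Fin n → Fin k → Fin n → ℝ) (r : Fin n → Fin k → ℝ)
    (γ : ℝ) (π π' : Fin n → Fin k) : Prop :=
  Dominates P r γ π π' ∧ ∃ s, polValue P r γ π s < polValue P r γ π' s

/-- A set of state-action pairs is well-defined if it contains each state at most once. -/
def WellDefined {n k : ℕ} (U : Set (Fin n × Fin k)) : Prop :=
  ∀ s a a', (s, a) ∈ U → (s, a') ∈ U → a = a'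

-- `π ⊕ U` : the policy obtained from `π` by switching the action at `s` to `a`
-- for each `(s, a) ∈ U` (intended for well-defined `U`).
open Classical in
noncomputable def switch {n k : ℕ} (π : Fin n → Fin k) (U : Set (Fin n × Fin k)) :
    Fin n → Fin k :=
  fun s => if h : ∃ a, (s, a) ∈ U then h.choose else π s

/-- The improvement set `T^π = {(s,a) : π ⊕ {(s,a)} ≻ π}`. -/
def improvementSet {n k : ℕ} (P : Fin n → Fin k → Fin n → ℝ) (r : Fin n → Fin k → ℝ)
    (γ : ℝ) (π : Fin n → Fin k) : Set (Fin n × Fin k) :=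
  {p | StrictDominates P r γ π (Function.update π p.1 p.2)}

/-- The set of improvement states `S^π`. -/
def improvementStates {n k : ℕ} (P : Fin n → Fin k → Fin n → ℝ) (r : Fin n → Fin k → ℝ)
    (γ : ℝ) (π : Fin n → Fin k) : Set (Fin n) :=
  {s | ∃ a, (s, a) ∈ improvementSet P r γ π}


section aux

variable {n : ℕ}

/-- geometric series operator -/
noncomputable def Gv (γ : ℝ) (A : Matrix (Fin n) (Fin n) ℝ) (c : Fin n → ℝ) : Fin n → ℝ :=
  ∑' i : ℕ, γ ^ i • (A ^ i).mulVec c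

variable {γ : ℝ} {A : Matrix (Fin n) (Fin n) ℝ}

lemma mulVec_norm_le (h0 : ∀ s s', 0 ≤ A s s') (h1 : ∀ s, ∑ s', A s s' = 1)
    (x : Fin n → ℝ) : ‖A.mulVec x‖ ≤ ‖x‖ := by
  rw [pi_norm_le_iff_of_nonneg (norm_nonneg x)]
  intro s
  have : A.mulVec x s = ∑ s', A s s' * x s' := rfl
  rw [this, Real.norm_eq_abs]
  calc |∑ s', A s s' * x s'| ≤ ∑ s', |A s s' * x s'| := Finset.abs_sum_le_sum_abs _ _
    _ ≤ ∑ s', A s s' * ‖x‖ := by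
        apply Finset.sum_le_sum
        intro i _
        rw [abs_mul, abs_of_nonneg (h0 s i)]
        exact mul_le_mul_of_nonneg_left (norm_le_pi_norm x i) (h0 s i)
    _ = ‖x‖ := by rw [← Finset.sum_mul, h1 s, one_mul]

lemma pow_mulVec_norm_le (h0 : ∀ s s', 0 ≤ A s s') (h1 : ∀ s, ∑ s', A s s' = 1)
    (i : ℕ) (x : Fin n → ℝ) : ‖(A ^ i).mulVec x‖ ≤ ‖x‖ := by
  induction i with
  | zero => simp [Matrix.one_mulVec]
  | succ i ih =>
      rw [pow_succ', ← Matrix.mulVec_mulVec]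
      exact le_trans (mulVec_norm_le h0 h1 _) ih

lemma mulVec_nonneg' (h0 : ∀ s s', 0 ≤ A s s') {x : Fin n → ℝ}
    (hx : ∀ s, 0 ≤ x s) (s : Fin n) : 0 ≤ A.mulVec x s := by
  have : A.mulVec x s = ∑ s', A s s' * x s' := rfl
  rw [this]
  exact Finset.sum_nonneg fun i _ => mul_nonneg (h0 s i) (hx i)

lemma pow_mulVec_nonneg (h0 : ∀ s s', 0 ≤ A s s') {x : Fin n → ℝ}
    (hx : ∀ s, 0 ≤ x s) (i : ℕ) (s : Fin n) : 0 ≤ (A ^ i).mulVec x s := by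
  induction i generalizing s with
  | zero => simpa [Matrix.one_mulVec] using hx s
  | succ i ih =>
      rw [pow_succ', ← Matrix.mulVec_mulVec]
      exact mulVec_nonneg' h0 (fun t => ih t) s

lemma Gv_summable (h0 : ∀ s s', 0 ≤ A s s') (h1 : ∀ s, ∑ s', A s s' = 1)
    (hγ0 : 0 ≤ γ) (hγ1 : γ < 1) (c : Fin n → ℝ) :
    Summable fun i : ℕ => γ ^ i • (A ^ i).mulVec c := by
  apply Summable.of_norm_bounded (g := fun i => ‖c‖ * γ ^ i)
  · exact (summable_geometric_of_lt_one hγ0 hγ1).mul_left _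
  · intro i
    rw [norm_smul, Real.norm_eq_abs, abs_pow, abs_of_nonneg hγ0, mul_comm]
    exact mul_le_mul_of_nonneg_right (pow_mulVec_norm_le h0 h1 i c) (pow_nonneg hγ0 i)

lemma Gv_fixed (h0 : ∀ s s', 0 ≤ A s s') (h1 : ∀ s, ∑ s', A s s' = 1)
    (hγ0 : 0 ≤ γ) (hγ1 : γ < 1) (c : Fin n → ℝ) :
    Gv γ A c = c + γ • A.mulVec (Gv γ A c) := by
  classical
  have hsum := Gv_summable h0 h1 hγ0 hγ1 (A := A) c
  let T : (Fin n → ℝ) →L[ℝ] (Fin n → ℝ) :=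
    LinearMap.toContinuousLinearMap A.mulVecLin
  have hT : ∀ x, T x = A.mulVec x := fun x => rfl
  have key : Gv γ A c = (γ ^ 0 • (A ^ 0).mulVec c) +
      ∑' i : ℕ, γ ^ (i + 1) • (A ^ (i + 1)).mulVec c := hsum.tsum_eq_zero_add
  have step : ∀ i : ℕ, γ ^ (i + 1) • (A ^ (i + 1)).mulVec c
      = (γ • T) (γ ^ i • (A ^ i).mulVec c) := by
    intro i
    simp only [ContinuousLinearMap.smul_apply, hT, Matrix.mulVec_smul,
      pow_succ', ← Matrix.mulVec_mulVec, smul_smul]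
  conv_lhs => rw [key]
  simp only [pow_zero, one_smul, Matrix.one_mulVec]
  congr 1
  calc (∑' i : ℕ, γ ^ (i + 1) • (A ^ (i + 1)).mulVec c)
      = ∑' i : ℕ, (γ • T) (γ ^ i • (A ^ i).mulVec c) := tsum_congr step
    _ = (γ • T) (∑' i : ℕ, γ ^ i • (A ^ i).mulVec c) := ((γ • T).map_tsum hsum).symm
    _ = γ • A.mulVec (Gv γ A c) := by
        simp only [ContinuousLinearMap.smul_apply, hT]; rfl

lemma fix_zero (h0 : ∀ s s', 0 ≤ A s s') (h1 : ∀ s, ∑ s', A s s' = 1)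
    (hγ0 : 0 ≤ γ) (hγ1 : γ < 1) {w : Fin n → ℝ}
    (hw : w = γ • A.mulVec w) : w = 0 := by
  have h : ‖w‖ ≤ γ * ‖w‖ := by
    calc ‖w‖ = ‖γ • A.mulVec w‖ := by rw [← hw]
      _ = |γ| * ‖A.mulVec w‖ := by rw [norm_smul, Real.norm_eq_abs]
      _ ≤ γ * ‖w‖ := by
          rw [abs_of_nonneg hγ0]
          exact mul_le_mul_of_nonneg_left (mulVec_norm_le h0 h1 w) hγ0
  have : ‖w‖ ≤ 0 := by nlinarith [norm_nonneg w]
  simpa [norm_le_zero_iff] using this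

lemma fix_unique (h0 : ∀ s s', 0 ≤ A s s') (h1 : ∀ s, ∑ s', A s s' = 1)
    (hγ0 : 0 ≤ γ) (hγ1 : γ < 1) {w c : Fin n → ℝ}
    (hw : w = c + γ • A.mulVec w) : w = Gv γ A c := by
  have hG := Gv_fixed h0 h1 hγ0 hγ1 c
  have hz : w - Gv γ A c = γ • A.mulVec (w - Gv γ A c) := by
    rw [Matrix.mulVec_sub, smul_sub]
    nth_rewrite 1 [hw]
    nth_rewrite 1 [hG]
    abel
  exact sub_eq_zero.mp (fix_zero h0 h1 hγ0 hγ1 hz)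

lemma Gv_apply (h0 : ∀ s s', 0 ≤ A s s') (h1 : ∀ s, ∑ s', A s s' = 1)
    (hγ0 : 0 ≤ γ) (hγ1 : γ < 1) (c : Fin n → ℝ) (s : Fin n) :
    Gv γ A c s = ∑' i : ℕ, γ ^ i * ((A ^ i).mulVec c s) := by
  rw [Gv, tsum_apply (Gv_summable h0 h1 hγ0 hγ1 c)]
  rfl

lemma Gv_nonneg (h0 : ∀ s s', 0 ≤ A s s') (h1 : ∀ s, ∑ s', A s s' = 1)
    (hγ0 : 0 ≤ γ) (hγ1 : γ < 1) {c : Fin n → ℝ} (hc : ∀ s, 0 ≤ c s) (s : Fin n) :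
    c s ≤ Gv γ A c s ∧ 0 ≤ Gv γ A c s := by
  have hsum := Gv_summable h0 h1 hγ0 hγ1 (A := A) c
  have hsum' : Summable fun i : ℕ => γ ^ i * ((A ^ i).mulVec c s) := by
    have := hsum.map (ContinuousLinearMap.proj (R := ℝ) (φ := fun _ : Fin n => ℝ) s)
      (ContinuousLinearMap.continuous _)
    simpa [Function.comp_def] using this
  have hterm : ∀ i : ℕ, 0 ≤ γ ^ i * ((A ^ i).mulVec c s) := fun i =>
    mul_nonneg (pow_nonneg hγ0 i) (pow_mulVec_nonneg h0 hc i s)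
  rw [Gv_apply h0 h1 hγ0 hγ1]
  refine ⟨?_, tsum_nonneg hterm⟩
  have h0' : γ ^ 0 * ((A ^ 0).mulVec c s) = c s := by simp [Matrix.one_mulVec]
  calc c s = γ ^ 0 * ((A ^ 0).mulVec c s) := h0'.symm
    _ ≤ _ := Summable.le_tsum hsum' 0 (fun j _ => hterm j)

lemma Gv_neg (c : Fin n → ℝ) : Gv γ A (-c) = -Gv γ A c := by
  simp [Gv, Matrix.mulVec_neg, smul_neg, tsum_neg]

end aux

section mdp

variable {n k : ℕ}

/-- advantage of action `a` at state `s` relative to policy `π`. -/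
noncomputable def adv (P : Fin n → Fin k → Fin n → ℝ) (r : Fin n → Fin k → ℝ)
    (γ : ℝ) (π : Fin n → Fin k) (s : Fin n) (a : Fin k) : ℝ :=
  r s a + γ * ∑ s', P s a s' * polValue P r γ π s' - polValue P r γ π s

lemma polValue_eq_Gv (P : Fin n → Fin k → Fin n → ℝ) (r : Fin n → Fin k → ℝ)
    (γ : ℝ) (π : Fin n → Fin k) :
    polValue P r γ π = Gv γ (polMatrix P π) (polReward r π) := rfl

lemma eVec_eq (P : Fin n → Fin k → Fin n → ℝ) (r : Fin n → Fin k → ℝ)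
    (γ : ℝ) (π π' : Fin n → Fin k) :
    (polReward r π' + γ • (polMatrix P π').mulVec (polValue P r γ π) - polValue P r γ π)
      = fun t => adv P r γ π t (π' t) := rfl

lemma bellman (P : Fin n → Fin k → Fin n → ℝ) (r : Fin n → Fin k → ℝ) (γ : ℝ)
    (hP0 : ∀ s a s', 0 ≤ P s a s') (hP1 : ∀ s a, ∑ s', P s a s' = 1)
    (hγ0 : 0 ≤ γ) (hγ1 : γ < 1) (π : Fin n → Fin k) :
    polValue P r γ π = polReward r π + γ • (polMatrix P π).mulVec (polValue P r γ π) := by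
  rw [polValue_eq_Gv]
  exact Gv_fixed (fun s s' => hP0 s (π s) s') (fun s => hP1 s (π s)) hγ0 hγ1 _

lemma value_diff (P : Fin n → Fin k → Fin n → ℝ) (r : Fin n → Fin k → ℝ) (γ : ℝ)
    (hP0 : ∀ s a s', 0 ≤ P s a s') (hP1 : ∀ s a, ∑ s', P s a s' = 1)
    (hγ0 : 0 ≤ γ) (hγ1 : γ < 1) (π π' : Fin n → Fin k) :
    polValue P r γ π' - polValue P r γ π
      = Gv γ (polMatrix P π') (fun t => adv P r γ π t (π' t)) := by
  set v := polValue P r γ π with hv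
  set v' := polValue P r γ π' with hv'
  set A' := polMatrix P π' with hA'
  have hB' : v' = polReward r π' + γ • A'.mulVec v' := bellman P r γ hP0 hP1 hγ0 hγ1 π'
  apply fix_unique (fun s s' => hP0 s (π' s) s') (fun s => hP1 s (π' s)) hγ0 hγ1
  rw [← eVec_eq P r γ π π']
  calc v' - v = (polReward r π' + γ • A'.mulVec v') - v := by rw [← hB']
    _ = (polReward r π' + γ • A'.mulVec v - v) + (γ • A'.mulVec v' - γ • A'.mulVec v) := by
        abel
    _ = (polReward r π' + γ • A'.mulVec v - v) + γ • A'.mulVec (v' - v) := by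
        rw [Matrix.mulVec_sub, smul_sub]

lemma adv_base (P : Fin n → Fin k → Fin n → ℝ) (r : Fin n → Fin k → ℝ) (γ : ℝ)
    (hP0 : ∀ s a s', 0 ≤ P s a s') (hP1 : ∀ s a, ∑ s', P s a s' = 1)
    (hγ0 : 0 ≤ γ) (hγ1 : γ < 1) (π : Fin n → Fin k) (s : Fin n) :
    adv P r γ π s (π s) = 0 := by
  have h : (polReward r π + γ • (polMatrix P π).mulVec (polValue P r γ π)
      - polValue P r γ π) = 0 := by
    rw [← bellman P r γ hP0 hP1 hγ0 hγ1 π]; simp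
  have := congrFun ((eVec_eq P r γ π π).symm.trans h) s
  simpa using this

lemma adv_pos_of_mem (P : Fin n → Fin k → Fin n → ℝ) (r : Fin n → Fin k → ℝ) (γ : ℝ)
    (hP0 : ∀ s a s', 0 ≤ P s a s') (hP1 : ∀ s a, ∑ s', P s a s' = 1)
    (hγ0 : 0 ≤ γ) (hγ1 : γ < 1) (π : Fin n → Fin k) {s : Fin n} {a : Fin k}
    (h : (s, a) ∈ improvementSet P r γ π) : 0 < adv P r γ π s a := by
  by_contra hcon
  push_neg at hcon
  obtain ⟨-, t, hlt⟩ := h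
  set π' := Function.update π s a with hπ'
  have hdiff := value_diff P r γ hP0 hP1 hγ0 hγ1 π π'
  have he : ∀ t', adv P r γ π t' (π' t') ≤ 0 := by
    intro t'
    by_cases h' : t' = s
    · subst h'
      rw [hπ', Function.update_self]
      exact hcon
    · rw [hπ', Function.update_of_ne h']
      rw [adv_base P r γ hP0 hP1 hγ0 hγ1 π t']
  have hGle : Gv γ (polMatrix P π') (fun t' => adv P r γ π t' (π' t')) t ≤ 0 := by
    have hneg : ∀ t', 0 ≤ (-(fun t' => adv P r γ π t' (π' t'))) t' := by
      intro t'; simpa using he t'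
    have := (Gv_nonneg (fun u u' => hP0 u (π' u) u') (fun u => hP1 u (π' u))
      hγ0 hγ1 hneg t).2
    have this : 0 ≤ Gv γ (polMatrix P π') (-(fun t' => adv P r γ π t' (π' t'))) t := this
    rw [Gv_neg] at this
    simpa using this
  have : polValue P r γ π' t - polValue P r γ π t ≤ 0 := by
    have := congrFun hdiff t
    rw [Pi.sub_apply] at this
    rw [this]
    exact hGle
  linarith

end mdp

theorem switch_strict_improvement (n k : ℕ) (hn : 1 ≤ n) (hk : 1 ≤ k)
    (P : Fin n → Fin k → Fin n → ℝ) (r : Fin n → Fin k → ℝ) (γ : ℝ)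
    (hP0 : ∀ s a s', 0 ≤ P s a s') (hP1 : ∀ s a, ∑ s', P s a s' = 1)
    (hγ0 : 0 ≤ γ) (hγ1 : γ < 1)
    (π : Fin n → Fin k) (U : Set (Fin n × Fin k)) (hne : U.Nonempty)
    (hwd : WellDefined U) (hsub : U ⊆ improvementSet P r γ π) :
    StrictDominates P r γ π (switch π U) := by
  set π' := switch π U with hπ'
  have h0' : ∀ s s', 0 ≤ polMatrix P π' s s' := fun s s' => hP0 s (π' s) s'
  have h1' : ∀ s, ∑ s', polMatrix P π' s s' = 1 := fun s => hP1 s (π' s)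
  have hdiff := value_diff P r γ hP0 hP1 hγ0 hγ1 π π'
  have he : ∀ t, 0 ≤ adv P r γ π t (π' t) := by
    intro t
    by_cases h : ∃ a, (t, a) ∈ U
    · have hval : π' t = h.choose := by
        rw [hπ', switch]; exact dif_pos h
      rw [hval]
      exact le_of_lt (adv_pos_of_mem P r γ hP0 hP1 hγ0 hγ1 π (hsub h.choose_spec))
    · have hval : π' t = π t := by
        rw [hπ', switch]; exact dif_neg h
      rw [hval, adv_base P r γ hP0 hP1 hγ0 hγ1 π t]
  have hdom : ∀ s, polValue P r γ π s ≤ polValue P r γ π' s := by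
    intro s
    have h2 := (Gv_nonneg h0' h1' hγ0 hγ1 he s).2
    have := congrFun hdiff s
    rw [Pi.sub_apply] at this
    linarith [this ▸ h2, (this.symm ▸ h2 : (0:ℝ) ≤ polValue P r γ π' s - polValue P r γ π s)]
  refine ⟨hdom, ?_⟩
  obtain ⟨⟨s₀, a₀⟩, hmem⟩ := hne
  refine ⟨s₀, ?_⟩
  have hex : ∃ a, (s₀, a) ∈ U := ⟨a₀, hmem⟩
  have hval : π' s₀ = hex.choose := by
    rw [hπ', switch]; exact dif_pos hex
  have hpos : 0 < adv P r γ π s₀ (π' s₀) := by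
    rw [hval]
    exact adv_pos_of_mem P r γ hP0 hP1 hγ0 hγ1 π (hsub hex.choose_spec)
  have h1 := (Gv_nonneg h0' h1' hγ0 hγ1 he s₀).1
  have h2 := congrFun hdiff s₀
  rw [Pi.sub_apply] at h2
  have : 0 < polValue P r γ π' s₀ - polValue P r γ π s₀ := by
    rw [h2]; exact lt_of_lt_of_le hpos h1
  linarith
end

section
/- In a discounted MDP, let π and π' be two policies such that π'(s) = π(s) for every improvement state s ∈ S^π. Then π' ⪯ π. -/
open Matrix Finset
namespace MDPaux
variable {n : ℕ}
structure Stoch (M : Matrix (Fin n) (Fin n) ℝ) : Prop where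
  nonneg : ∀ i j, 0 ≤ M i j
  rowsum : ∀ i, ∑ j, M i j = 1
variable {γ : ℝ}
-- (assume earlier lemmas; re-stated as axioms for speed of iteration? no, just include)
lemma Stoch.pow {M : Matrix (Fin n) (Fin n) ℝ} (hM : Stoch M) (i : ℕ) : Stoch (M ^ i) := by
  induction i with
  | zero =>
    refine ⟨fun i j => ?_, fun i => ?_⟩ <;> simp [Matrix.one_apply]
    split <;> norm_num
  | succ i ih =>
    rw [pow_succ]
    refine ⟨fun a b => ?_, fun a => ?_⟩
    · rw [Matrix.mul_apply]
      exact Finset.sum_nonneg fun c _ => mul_nonneg (ih.nonneg a c) (hM.nonneg c b)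
    · simp only [Matrix.mul_apply]
      rw [Finset.sum_comm]
      calc ∑ c, ∑ b, (M ^ i) a c * M c b
          = ∑ c, (M ^ i) a c * ∑ b, M c b := by simp [Finset.mul_sum]
        _ = 1 := by simp [hM.rowsum, ih.rowsum a]

lemma Stoch.entry_le_one {M : Matrix (Fin n) (Fin n) ℝ} (hM : Stoch M) (i j : Fin n) :
    M i j ≤ 1 :=
  (hM.rowsum i) ▸ Finset.single_le_sum (fun j _ => hM.nonneg i j) (Finset.mem_univ j)

lemma mulVec_apply' (M : Matrix (Fin n) (Fin n) ℝ) (w : Fin n → ℝ) (s : Fin n) :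
    M.mulVec w s = ∑ j, M s j * w j := rfl

lemma mulVec_abs_le {M : Matrix (Fin n) (Fin n) ℝ} (hM : Stoch M) (w : Fin n → ℝ) (s : Fin n) :
    |M.mulVec w s| ≤ ∑ j, |w j| := by
  rw [mulVec_apply']
  calc |∑ j, M s j * w j| ≤ ∑ j, |M s j * w j| := Finset.abs_sum_le_sum_abs _ _
    _ ≤ ∑ j, |w j| := Finset.sum_le_sum fun j _ => by
        rw [abs_mul, abs_of_nonneg (hM.nonneg s j)]
        exact mul_le_of_le_one_left (abs_nonneg _) (hM.entry_le_one s j)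

variable {γ : ℝ}

lemma summable_coord (hγ0 : 0 ≤ γ) (hγ1 : γ < 1) {M : Matrix (Fin n) (Fin n) ℝ}
    (hM : Stoch M) (w : Fin n → ℝ) (s : Fin n) :
    Summable fun i : ℕ => γ ^ i * (M ^ i).mulVec w s := by
  apply Summable.of_norm_bounded (g := fun i => (∑ j, |w j|) * γ ^ i)
    ((summable_geometric_of_lt_one hγ0 hγ1).mul_left _)
  intro i
  rw [Real.norm_eq_abs, abs_mul, abs_pow, abs_of_nonneg hγ0, mul_comm]
  exact mul_le_mul_of_nonneg_right (mulVec_abs_le (hM.pow i) w s) (pow_nonneg hγ0 i)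

lemma summable_pi (hγ0 : 0 ≤ γ) (hγ1 : γ < 1) {M : Matrix (Fin n) (Fin n) ℝ}
    (hM : Stoch M) (w : Fin n → ℝ) :
    Summable fun i : ℕ => γ ^ i • (M ^ i).mulVec w := by
  rw [Pi.summable]
  intro s
  simpa [smul_eq_mul] using summable_coord hγ0 hγ1 hM w s


variable {k : ℕ}

lemma polMatrix_stoch (P : Fin n → Fin k → Fin n → ℝ)
    (hP0 : ∀ s a s', 0 ≤ P s a s') (hP1 : ∀ s a, ∑ s', P s a s' = 1)
    (π : Fin n → Fin k) : Stoch (polMatrix P π) :=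
  ⟨fun s s' => hP0 s (π s) s', fun s => hP1 s (π s)⟩

lemma value_apply (hγ0 : 0 ≤ γ) (hγ1 : γ < 1) {P : Fin n → Fin k → Fin n → ℝ}
    (hP0 : ∀ s a s', 0 ≤ P s a s') (hP1 : ∀ s a, ∑ s', P s a s' = 1)
    (r : Fin n → Fin k → ℝ) (π : Fin n → Fin k) (s : Fin n) :
    polValue P r γ π s = ∑' i : ℕ, γ ^ i * (polMatrix P π ^ i).mulVec (polReward r π) s := by
  rw [polValue, tsum_apply (summable_pi hγ0 hγ1 (polMatrix_stoch P hP0 hP1 π) _)]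
  simp [smul_eq_mul]

lemma bellman (hγ0 : 0 ≤ γ) (hγ1 : γ < 1) {P : Fin n → Fin k → Fin n → ℝ}
    (hP0 : ∀ s a s', 0 ≤ P s a s') (hP1 : ∀ s a, ∑ s', P s a s' = 1)
    (r : Fin n → Fin k → ℝ) (π : Fin n → Fin k) (s : Fin n) :
    polValue P r γ π s
      = polReward r π s + γ * (polMatrix P π).mulVec (polValue P r γ π) s := by
  set M := polMatrix P π with hMdef
  set w := polReward r π with hwdef
  have hM : Stoch M := polMatrix_stoch P hP0 hP1 π
  have hA : Summable fun i : ℕ => γ ^ i * (M ^ i).mulVec w s := summable_coord hγ0 hγ1 hM w s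
  have h1 : M.mulVec (polValue P r γ π) s = ∑' i : ℕ, γ ^ i * (M ^ (i + 1)).mulVec w s := by
    rw [mulVec_apply']
    have : ∀ j, polValue P r γ π j = ∑' i : ℕ, γ ^ i * (M ^ i).mulVec w j :=
      value_apply hγ0 hγ1 hP0 hP1 r π
    calc ∑ j, M s j * polValue P r γ π j
        = ∑ j, ∑' i : ℕ, M s j * (γ ^ i * (M ^ i).mulVec w j) := by
          refine Finset.sum_congr rfl fun j _ => ?_
          rw [this j, tsum_mul_left]
      _ = ∑' i : ℕ, ∑ j, M s j * (γ ^ i * (M ^ i).mulVec w j) :=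
          (Summable.tsum_finsetSum fun j _ => (summable_coord hγ0 hγ1 hM w j).mul_left _).symm
      _ = ∑' i : ℕ, γ ^ i * (M ^ (i + 1)).mulVec w s := by
          refine tsum_congr fun i => ?_
          rw [pow_succ', ← Matrix.mulVec_mulVec, mulVec_apply' M ((M ^ i).mulVec w) s,
            Finset.mul_sum]
          exact Finset.sum_congr rfl fun j _ => by ring
  have h2 : γ * M.mulVec (polValue P r γ π) s
      = ∑' i : ℕ, γ ^ (i + 1) * (M ^ (i + 1)).mulVec w s := by
    rw [h1, ← tsum_mul_left]
    exact tsum_congr fun i => by ring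
  have h3 : polValue P r γ π s = ∑' i : ℕ, γ ^ i * (M ^ i).mulVec w s :=
    value_apply hγ0 hγ1 hP0 hP1 r π s
  rw [h3, Summable.tsum_eq_zero_add hA, h2]
  simp [Matrix.one_mulVec]

/-- The Bellman residual of policy `τ` with respect to the value of `π`. -/
noncomputable def resid (P : Fin n → Fin k → Fin n → ℝ) (r : Fin n → Fin k → ℝ) (γ : ℝ)
    (π τ : Fin n → Fin k) : Fin n → ℝ :=
  fun t => polReward r τ t + γ * (polMatrix P τ).mulVec (polValue P r γ π) t
    - polValue P r γ π t

lemma key (hγ0 : 0 ≤ γ) (hγ1 : γ < 1) {P : Fin n → Fin k → Fin n → ℝ}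
    (hP0 : ∀ s a s', 0 ≤ P s a s') (hP1 : ∀ s a, ∑ s', P s a s' = 1)
    (r : Fin n → Fin k → ℝ) (π τ : Fin n → Fin k) (s : Fin n) :
    polValue P r γ τ s - polValue P r γ π s
      = ∑' i : ℕ, γ ^ i * (polMatrix P τ ^ i).mulVec (resid P r γ π τ) s := by
  set M := polMatrix P τ with hMdef
  have hM : Stoch M := polMatrix_stoch P hP0 hP1 τ
  set v := polValue P r γ π with hvdef
  set A : ℕ → ℝ := fun i => γ ^ i * (M ^ i).mulVec (polReward r τ) s with hAdef
  set B : ℕ → ℝ := fun i => γ ^ i * (M ^ i).mulVec v s with hBdef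
  have hA : Summable A := summable_coord hγ0 hγ1 hM _ s
  have hB : Summable B := summable_coord hγ0 hγ1 hM _ s
  have hB' : Summable fun i => B (i + 1) := (summable_nat_add_iff 1).mpr hB
  have hterm : ∀ i : ℕ, γ ^ i * (M ^ i).mulVec (resid P r γ π τ) s
      = A i + B (i + 1) - B i := by
    intro i
    have hmid : ∑ j, (M ^ i) s j * M.mulVec v j = (M ^ (i + 1)).mulVec v s := by
      rw [pow_succ, ← Matrix.mulVec_mulVec, mulVec_apply' (M ^ i) (M.mulVec v) s]
    have : (M ^ i).mulVec (resid P r γ π τ) s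
        = (M ^ i).mulVec (polReward r τ) s + γ * (M ^ (i + 1)).mulVec v s
          - (M ^ i).mulVec v s := by
      rw [mulVec_apply', mulVec_apply' (M ^ i) (polReward r τ), mulVec_apply' (M ^ i) v,
        ← hmid, Finset.mul_sum, ← Finset.sum_add_distrib, ← Finset.sum_sub_distrib]
      refine Finset.sum_congr rfl fun j _ => ?_
      simp only [resid]
      ring
    rw [this, hAdef, hBdef]
    simp only
    ring
  calc polValue P r γ τ s - v s
      = (∑' i, A i) + ((∑' i, B (i + 1)) - ∑' i, B i) := by
        rw [Summable.tsum_eq_zero_add hB]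
        have hA' : ∑' i, A i = polValue P r γ τ s :=
          (value_apply hγ0 hγ1 hP0 hP1 r τ s).symm
        have hB0 : B 0 = v s := by simp [hBdef, Matrix.one_mulVec]
        rw [hA', hB0]
        ring
    _ = ∑' i, (A i + (B (i + 1) - B i)) := by
        rw [Summable.tsum_add hA (hB'.sub hB), Summable.tsum_sub hB' hB]
    _ = ∑' i : ℕ, γ ^ i * (M ^ i).mulVec (resid P r γ π τ) s := by
        refine tsum_congr fun i => ?_
        rw [hterm i]; ring

lemma resid_congr {P : Fin n → Fin k → Fin n → ℝ} (r : Fin n → Fin k → ℝ)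
    (π τ τ' : Fin n → Fin k) (t : Fin n) (h : τ t = τ' t) :
    resid P r γ π τ t = resid P r γ π τ' t := by
  simp [resid, polReward, mulVec_apply', polMatrix, h]

lemma resid_eq_zero (hγ0 : 0 ≤ γ) (hγ1 : γ < 1) {P : Fin n → Fin k → Fin n → ℝ}
    (hP0 : ∀ s a s', 0 ≤ P s a s') (hP1 : ∀ s a, ∑ s', P s a s' = 1)
    (r : Fin n → Fin k → ℝ) (π τ : Fin n → Fin k) (t : Fin n) (h : τ t = π t) :
    resid P r γ π τ t = 0 := by
  rw [resid_congr r π τ π t h, resid]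
  have := bellman hγ0 hγ1 hP0 hP1 r π t
  linarith

end MDPaux

open MDPaux

theorem agree_on_improvement_states (n k : ℕ) (hn : 1 ≤ n) (hk : 1 ≤ k)
    (P : Fin n → Fin k → Fin n → ℝ) (r : Fin n → Fin k → ℝ) (γ : ℝ)
    (hP0 : ∀ s a s', 0 ≤ P s a s') (hP1 : ∀ s a, ∑ s', P s a s' = 1)
    (hγ0 : 0 ≤ γ) (hγ1 : γ < 1)
    (π π' : Fin n → Fin k)
    (hagree : ∀ s ∈ improvementStates P r γ π, π' s = π s) :
    Dominates P r γ π' π := by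
  have hres : ∀ t, resid P r γ π π' t ≤ 0 := by
    intro t
    by_cases ht : π' t = π t
    · exact le_of_eq (resid_eq_zero hγ0 hγ1 hP0 hP1 r π π' t ht)
    · have htS : t ∉ improvementStates P r γ π := fun h => ht (hagree t h)
      by_contra hpos
      push_neg at hpos
      set a := π' t with ha
      set σ : Fin n → Fin k := Function.update π t a with hσ
      have hMσ : Stoch (polMatrix P σ) := polMatrix_stoch P hP0 hP1 σ
      have hresσ : ∀ j, resid P r γ π σ j
          = if j = t then resid P r γ π π' t else 0 := by
        intro j
        by_cases hj : j = t
        · subst hj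
          rw [if_pos rfl]
          exact resid_congr r π σ π' j (by simp [hσ]; exact ha)
        · rw [if_neg hj]
          exact resid_eq_zero hγ0 hγ1 hP0 hP1 r π σ j (by simp [hσ, hj])
      have hnonneg : ∀ j, 0 ≤ resid P r γ π σ j := by
        intro j
        rw [hresσ j]
        split
        · exact le_of_lt hpos
        · exact le_rfl
      have htermnn : ∀ (u : Fin n) (i : ℕ),
          0 ≤ γ ^ i * (polMatrix P σ ^ i).mulVec (resid P r γ π σ) u := by
        intro u i
        refine mul_nonneg (pow_nonneg hγ0 i) ?_
        rw [mulVec_apply']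
        exact Finset.sum_nonneg fun j _ =>
          mul_nonneg ((hMσ.pow i).nonneg u j) (hnonneg j)
      have hdom : StrictDominates P r γ π σ := by
        constructor
        · intro u
          have hk := key hγ0 hγ1 hP0 hP1 r π σ u
          have : 0 ≤ polValue P r γ σ u - polValue P r γ π u := by
            rw [hk]
            exact tsum_nonneg (htermnn u)
          linarith
        · refine ⟨t, ?_⟩
          have hk := key hγ0 hγ1 hP0 hP1 r π σ t
          have hsum : Summable fun i : ℕ =>
              γ ^ i * (polMatrix P σ ^ i).mulVec (resid P r γ π σ) t :=
            summable_coord hγ0 hγ1 hMσ _ t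
          have hfirst : γ ^ 0 * (polMatrix P σ ^ 0).mulVec (resid P r γ π σ) t
              ≤ ∑' i : ℕ, γ ^ i * (polMatrix P σ ^ i).mulVec (resid P r γ π σ) t :=
            Summable.le_tsum hsum 0 fun j _ => htermnn t j
          have h0 : γ ^ 0 * (polMatrix P σ ^ 0).mulVec (resid P r γ π σ) t
              = resid P r γ π π' t := by
            simp [Matrix.one_mulVec, hresσ t]
          rw [h0] at hfirst
          have : 0 < polValue P r γ σ t - polValue P r γ π t := by
            rw [hk]; exact lt_of_lt_of_le hpos hfirst
          linarith
      exact htS ⟨a, hdom⟩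
  intro u
  have hk := key hγ0 hγ1 hP0 hP1 r π π' u
  have hM' : Stoch (polMatrix P π') := polMatrix_stoch P hP0 hP1 π'
  have hle : ∑' i : ℕ, γ ^ i * (polMatrix P π' ^ i).mulVec (resid P r γ π π') u ≤ 0 := by
    refine tsum_nonpos fun i => ?_
    refine mul_nonpos_of_nonneg_of_nonpos (pow_nonneg hγ0 i) ?_
    rw [mulVec_apply']
    exact Finset.sum_nonpos fun j _ =>
      mul_nonpos_of_nonneg_of_nonpos ((hM'.pow i).nonneg u j) (hres j)
  linarith
end

section
/- In a discounted MDP, if two policies π and π' differ in exactly one state (they are neighbors), then they are comparable: either v^π(s) ≤ v^{π'}(s) for all states s, or v^{π'}(s) ≤ v^π(s) for all states s. -/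
open Matrix

def MStoch {n : ℕ} (M : Matrix (Fin n) (Fin n) ℝ) : Prop :=
  (∀ i j, 0 ≤ M i j) ∧ ∀ i, ∑ j, M i j = 1

lemma MStoch.one {n : ℕ} : MStoch (1 : Matrix (Fin n) (Fin n) ℝ) := by
  constructor
  · intro i j
    by_cases h : i = j <;> simp [Matrix.one_apply, h]
  · intro i; simp [Matrix.one_apply]

lemma MStoch.mul {n : ℕ} {M N : Matrix (Fin n) (Fin n) ℝ} (hM : MStoch M) (hN : MStoch N) :
    MStoch (M * N) := by
  constructor
  · intro i j
    rw [Matrix.mul_apply]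
    exact Finset.sum_nonneg fun l _ => mul_nonneg (hM.1 i l) (hN.1 l j)
  · intro i
    simp only [Matrix.mul_apply]
    rw [Finset.sum_comm]
    simp [← Finset.mul_sum, hN.2, hM.2 i]

lemma MStoch.pow {n : ℕ} {M : Matrix (Fin n) (Fin n) ℝ} (hM : MStoch M) (i : ℕ) :
    MStoch (M ^ i) := by
  induction i with
  | zero => simpa using MStoch.one
  | succ i ih => rw [pow_succ]; exact ih.mul hM

lemma MStoch.mulVec_norm_le {n : ℕ} {M : Matrix (Fin n) (Fin n) ℝ} (hM : MStoch M)
    (w : Fin n → ℝ) : ‖M.mulVec w‖ ≤ ‖w‖ := by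
  rw [pi_norm_le_iff_of_nonneg (norm_nonneg w)]
  intro s
  rw [Real.norm_eq_abs, Matrix.mulVec, dotProduct]
  calc |∑ s', M s s' * w s'| ≤ ∑ s', |M s s' * w s'| := Finset.abs_sum_le_sum_abs _ _
    _ ≤ ∑ s', M s s' * ‖w‖ := by
        apply Finset.sum_le_sum
        intro s' _
        rw [abs_mul, abs_of_nonneg (hM.1 s s')]
        exact mul_le_mul_of_nonneg_left (norm_le_pi_norm w s') (hM.1 s s')
    _ = ‖w‖ := by rw [← Finset.sum_mul, hM.2 s, one_mul]

lemma summable_series {n : ℕ} {M : Matrix (Fin n) (Fin n) ℝ} (hM : MStoch M) {γ : ℝ}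
    (hγ0 : 0 ≤ γ) (hγ1 : γ < 1) (w : Fin n → ℝ) :
    Summable (fun i : ℕ => γ ^ i • (M ^ i).mulVec w) := by
  apply Summable.of_norm_bounded (g := fun i => γ ^ i * ‖w‖)
    ((summable_geometric_of_lt_one hγ0 hγ1).mul_right _)
  intro i
  rw [norm_smul, Real.norm_eq_abs, abs_of_nonneg (pow_nonneg hγ0 i)]
  exact mul_le_mul_of_nonneg_left ((hM.pow i).mulVec_norm_le w) (pow_nonneg hγ0 i)

lemma bellman_s17 {n : ℕ} {M : Matrix (Fin n) (Fin n) ℝ} (hM : MStoch M) {γ : ℝ}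
    (hγ0 : 0 ≤ γ) (hγ1 : γ < 1) (w : Fin n → ℝ) :
    (∑' i : ℕ, γ ^ i • (M ^ i).mulVec w)
      = w + γ • M.mulVec (∑' i : ℕ, γ ^ i • (M ^ i).mulVec w) := by
  have hs := summable_series hM hγ0 hγ1 w
  have hL : M.mulVec (∑' i : ℕ, γ ^ i • (M ^ i).mulVec w)
      = ∑' i : ℕ, M.mulVec (γ ^ i • (M ^ i).mulVec w) := by
    exact (LinearMap.toContinuousLinearMap (Matrix.mulVecLin M)).map_tsum hs
  have h2 : ∀ i : ℕ, γ • M.mulVec (γ ^ i • (M ^ i).mulVec w)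
      = γ ^ (i + 1) • (M ^ (i + 1)).mulVec w := by
    intro i
    rw [Matrix.mulVec_smul, Matrix.mulVec_mulVec, ← pow_succ', smul_smul, ← pow_succ']
  have hs2 : Summable (fun i : ℕ => M.mulVec (γ ^ i • (M ^ i).mulVec w)) :=
    hs.map (LinearMap.toContinuousLinearMap (Matrix.mulVecLin M))
      (LinearMap.toContinuousLinearMap (Matrix.mulVecLin M)).continuous
  rw [hL, ← Summable.tsum_const_smul _ hs2]
  · simp only [h2]
    rw [Summable.tsum_eq_zero_add hs]
    simp

lemma fixed_zero {n : ℕ} {M : Matrix (Fin n) (Fin n) ℝ} (hM : MStoch M) {γ : ℝ}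
    (hγ0 : 0 ≤ γ) (hγ1 : γ < 1) {x : Fin n → ℝ} (hx : x = γ • M.mulVec x) : x = 0 := by
  by_contra h
  have hn : 0 < ‖x‖ := norm_pos_iff.mpr h
  have hb : ‖x‖ ≤ γ * ‖x‖ := by
    calc ‖x‖ = ‖γ • M.mulVec x‖ := by rw [← hx]
      _ = |γ| * ‖M.mulVec x‖ := by rw [norm_smul, Real.norm_eq_abs]
      _ ≤ γ * ‖x‖ := by
          rw [abs_of_nonneg hγ0]
          exact mul_le_mul_of_nonneg_left (hM.mulVec_norm_le x) hγ0
  nlinarith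

theorem neighbors_comparable (n k : ℕ) (hn : 1 ≤ n) (hk : 1 ≤ k)
    (P : Fin n → Fin k → Fin n → ℝ) (r : Fin n → Fin k → ℝ) (γ : ℝ)
    (hP0 : ∀ s a s', 0 ≤ P s a s') (hP1 : ∀ s a, ∑ s', P s a s' = 1)
    (hγ0 : 0 ≤ γ) (hγ1 : γ < 1)
    (π π' : Fin n → Fin k)
    (hnb : (Finset.univ.filter fun s => π s ≠ π' s).card = 1) :
    (∀ s, polValue P r γ π s ≤ polValue P r γ π' s) ∨
    (∀ s, polValue P r γ π' s ≤ polValue P r γ π s) := by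
  set M := polMatrix P π with hMdef
  set M' := polMatrix P π' with hM'def
  have hM : MStoch M := ⟨fun i j => hP0 _ _ _, fun i => hP1 _ _⟩
  have hM' : MStoch M' := ⟨fun i j => hP0 _ _ _, fun i => hP1 _ _⟩
  set v := polValue P r γ π with hv
  set v' := polValue P r γ π' with hv'
  have hbv : v = polReward r π + γ • M.mulVec v := bellman_s17 hM hγ0 hγ1 _
  have hbv' : v' = polReward r π' + γ • M'.mulVec v' := bellman_s17 hM' hγ0 hγ1 _
  set d := polReward r π' + γ • M'.mulVec v - v with hd
  set u := ∑' i : ℕ, γ ^ i • (M' ^ i).mulVec d with hu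
  have hbu : u = d + γ • M'.mulVec u := bellman_s17 hM' hγ0 hγ1 d
  have key : v' - v = u := by
    have e1 : γ • M'.mulVec v' = v' - polReward r π' := by
      conv_rhs => rw [hbv']
      abel
    have e2 : γ • M'.mulVec u = u - d := by
      conv_rhs => rw [hbu]
      abel
    have e3 : γ • M'.mulVec v = d - polReward r π' + v := by
      rw [hd]; abel
    have hx : (v' - v - u) = γ • M'.mulVec (v' - v - u) := by
      rw [Matrix.mulVec_sub, Matrix.mulVec_sub, smul_sub, smul_sub, e1, e2, e3]
      abel
    exact sub_eq_zero.mp (fixed_zero hM' hγ0 hγ1 hx)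
  obtain ⟨s₀, hs₀⟩ := Finset.card_eq_one.mp hnb
  have hoff : ∀ s, s ≠ s₀ → d s = 0 := by
    intro s hs
    have hππ : π s = π' s := by
      by_contra hc
      have hmem : s ∈ Finset.univ.filter fun t => π t ≠ π' t :=
        Finset.mem_filter.mpr ⟨Finset.mem_univ s, hc⟩
      rw [hs₀, Finset.mem_singleton] at hmem
      exact hs hmem
    have hrow : M'.mulVec v s = M.mulVec v s := by
      simp [Matrix.mulVec, dotProduct, hM'def, hMdef, polMatrix, hππ]
    have hvs := congrFun hbv s
    simp only [Pi.add_apply, Pi.smul_apply, smul_eq_mul] at hvs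
    have hds : d s = polReward r π' s + γ * M'.mulVec v s - v s := by
      rw [hd]; simp
    have hrs : polReward r π' s = polReward r π s := by simp [polReward, hππ]
    rw [hds, hrow, hrs, hvs]; ring
  have hsum : Summable (fun i : ℕ => γ ^ i • (M' ^ i).mulVec d) :=
    summable_series hM' hγ0 hγ1 d
  have hus : ∀ s, u s = ∑' i : ℕ, γ ^ i * ((M' ^ i).mulVec d s) := by
    intro s
    rw [hu, tsum_apply hsum]
    simp
  have hterm : ∀ (i : ℕ) (s : Fin n), (M' ^ i).mulVec d s = ∑ t, (M' ^ i) s t * d t :=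
    fun i s => rfl
  rcases le_total 0 (d s₀) with hpos | hneg
  · left
    intro s
    have hd0 : ∀ t, 0 ≤ d t := by
      intro t
      by_cases ht : t = s₀
      · rw [ht]; exact hpos
      · rw [hoff t ht]
    have hu0 : 0 ≤ u s := by
      rw [hus s]
      apply tsum_nonneg
      intro i
      apply mul_nonneg (pow_nonneg hγ0 i)
      rw [hterm]
      exact Finset.sum_nonneg fun t _ => mul_nonneg ((hM'.pow i).1 s t) (hd0 t)
    have hks := congrFun key s
    simp only [Pi.sub_apply] at hks
    linarith
  · right
    intro s
    have hd0 : ∀ t, d t ≤ 0 := by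
      intro t
      by_cases ht : t = s₀
      · rw [ht]; exact hneg
      · rw [hoff t ht]
    have hu0 : u s ≤ 0 := by
      rw [hus s]
      apply tsum_nonpos
      intro i
      apply mul_nonpos_of_nonneg_of_nonpos (pow_nonneg hγ0 i)
      rw [hterm]
      exact Finset.sum_nonpos fun t _ => mul_nonpos_of_nonneg_of_nonpos ((hM'.pow i).1 s t) (hd0 t)
    have hks := congrFun key s
    simp only [Pi.sub_apply] at hks
    linarith
end
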